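/- Let U be continuous in time, η = U − PU, and let P̂ be the interpolation operator additionally using the left endpoint t_{m−1}. Then for every m ∈ {1,…,M} and every ψ ∈ 𝒰^τ: Q_m,ρ[∂ₜM₀η, ψ] + ⟨M₀[η]_{m−1}^0, ψ(t_{m−1}+)⟩_H = Q_m,ρ[∂ₜM₀(U − P̂U), ψ] + R(U,ψ), where the remainder satisfies |R(U,ψ)| ≤ C α τ_m |M₀(PU − U)(t_{m−1}+)|_H² + β ⦀ψ⦀²_{Q,ρ,m} for all α, β > 0 with αβ = 1/4, with a constant C ≥ 0 depending only on the final time T and on ρ. -/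

import Mathlib

open MeasureTheory Real
open scoped RealInnerProductSpace

/-- `f` is an `H`-valued polynomial of degree at most `q`. -/
def IsPolyDeg {H : Type*} [NormedAddCommGroup H] [InnerProductSpace ℝ H]
    (q : ℕ) (f : ℝ → H) : Prop :=
  ∃ c : Fin (q + 1) → H, ∀ s : ℝ, f s = ∑ i : Fin (q + 1), s ^ (i : ℕ) • c i

/-- A right-sided Gauß–Radau quadrature with `q+1` nodes on the interval `(a,b]` with
weighting function `w`: nodes `a < node₀ < ⋯ < node_q = b`, positive weights, exact for
polynomials of degree at most `2q`. -/
def IsGaussRadauOn (q : ℕ) (w : ℝ → ℝ) (a b : ℝ) (node wt : Fin (q + 1) → ℝ) : Prop :=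
  StrictMono node ∧ (∀ i, node i ∈ Set.Ioc a b) ∧ node (Fin.last q) = b ∧
    (∀ i, 0 < wt i) ∧
    ∀ p : Polynomial ℝ, p.natDegree ≤ 2 * q →
      ∫ s in Set.Ioo a b, p.eval s * w s = ∑ i, wt i * p.eval (node i)

open Polynomial Finset

section AuxLemmas

variable {H : Type*} [NormedAddCommGroup H] [InnerProductSpace ℝ H]

lemma isPolyDeg_eq_zero {n : ℕ} {f : ℝ → H} (hf : IsPolyDeg n f)
    {pts : Fin (n + 1) → ℝ} (hinj : Function.Injective pts)
    (hz : ∀ j, f (pts j) = 0) (s : ℝ) : f s = 0 := by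
  obtain ⟨c, hc⟩ := hf
  have key : ∀ y : H, ⟪f s, y⟫ = 0 := by
    intro y
    set P : Polynomial ℝ := ∑ i : Fin (n + 1), Polynomial.C ⟪c i, y⟫ * X ^ (i : ℕ) with hP
    have hPeval : ∀ u : ℝ, P.eval u = ⟪f u, y⟫ := by
      intro u
      rw [hc u, sum_inner, hP]
      rw [Polynomial.eval_finset_sum]
      refine Finset.sum_congr rfl fun i _ => ?_
      rw [real_inner_smul_left]
      rw [Polynomial.eval_mul, Polynomial.eval_C, Polynomial.eval_pow, Polynomial.eval_X]
      ring
    have hdeg : P.natDegree ≤ n := by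
      refine Polynomial.natDegree_sum_le_of_forall_le _ _ fun i _ => ?_
      refine (Polynomial.natDegree_C_mul_le _ _).trans ?_
      simpa using (Nat.le_of_lt_succ i.2)
    have hP0 : P = 0 := by
      refine Polynomial.eq_zero_of_natDegree_lt_card_of_eval_eq_zero P hinj
        (fun j => by rw [hPeval, hz j, inner_zero_left]) ?_
      simpa using lt_of_le_of_lt hdeg (Nat.lt_succ_self n)
    have := hPeval s
    rw [hP0] at this
    simpa using this.symm
  simpa using key (f s)

lemma IsPolyDeg.sub {n : ℕ} {f g : ℝ → H} (hf : IsPolyDeg n f) (hg : IsPolyDeg n g) :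
    IsPolyDeg n fun s => f s - g s := by
  obtain ⟨c, hc⟩ := hf; obtain ⟨d, hd⟩ := hg
  exact ⟨fun i => c i - d i, fun s => by
    simp [hc, hd, smul_sub, Finset.sum_sub_distrib]⟩

lemma IsPolyDeg.succ {n : ℕ} {f : ℝ → H} (hf : IsPolyDeg n f) : IsPolyDeg (n + 1) f := by
  obtain ⟨c, hc⟩ := hf
  refine ⟨Fin.snoc c 0, fun s => ?_⟩
  rw [Fin.sum_univ_castSucc]
  simp [hc]

lemma isPolyDeg_eval_smul {n : ℕ} {P : Polynomial ℝ} (hP : P.natDegree ≤ n) (u : H) :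
    IsPolyDeg n fun s => P.eval s • u := by
  refine ⟨fun i => P.coeff i • u, fun s => ?_⟩
  have h1 : P.eval s = ∑ i ∈ Finset.range (n + 1), P.coeff i * s ^ i :=
    Polynomial.eval_eq_sum_range' (lt_of_le_of_lt hP (Nat.lt_succ_self n)) s
  show P.eval s • u = _
  rw [h1, Finset.sum_smul, ← Fin.sum_univ_eq_sum_range (fun i => (P.coeff i * s ^ i) • u) (n + 1)]
  refine Finset.sum_congr rfl fun i _ => ?_
  rw [smul_smul, mul_comm]

lemma IsPolyDeg.differentiable {n : ℕ} {f : ℝ → H} (hf : IsPolyDeg n f) :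
    Differentiable ℝ f := by
  obtain ⟨c, hc⟩ := hf
  have : Differentiable ℝ fun s : ℝ => ∑ i : Fin (n + 1), s ^ (i : ℕ) • c i := by
    apply Differentiable.fun_sum
    intro i _
    exact (differentiable_pow (i : ℕ)).smul_const (c i)
  intro s
  exact (this s).congr_of_eventuallyEq (Filter.Eventually.of_forall fun u => (hc u))


lemma derivative_prod_X_sub_C {ι : Type*} [DecidableEq ι] (s : Finset ι) (x : ι → ℝ) :
    (∏ i ∈ s, (X - C (x i))).derivative = ∑ j ∈ s, ∏ i ∈ s.erase j, (X - C (x i)) := by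
  induction s using Finset.induction_on with
  | empty => simp
  | insert _ _ ha ih =>
    rename_i c s'
    rw [Finset.prod_insert ha, derivative_mul, ih, Finset.sum_insert ha,
      Finset.erase_insert ha]
    have h1 : (X - C (x c)).derivative = 1 := by
      simp
    rw [h1, one_mul, Finset.mul_sum]
    congr 1
    refine Finset.sum_congr rfl fun j hj => ?_
    rw [Finset.erase_insert_of_ne (by rintro rfl; exact ha hj),
      Finset.prod_insert (fun hc => ha (Finset.mem_of_mem_erase hc))]


lemma integrableOn_poly_exp (P : Polynomial ℝ) (ρ a' a b : ℝ) :
    IntegrableOn (fun s => P.eval s * Real.exp (-2 * ρ * (s - a'))) (Set.Ioo a b) volume := by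
  have hcont : Continuous fun s : ℝ => P.eval s * Real.exp (-2 * ρ * (s - a')) := by
    exact (P.continuous_aeval).mul (Real.continuous_exp.comp (by continuity))
  exact (hcont.integrableOn_Icc).mono_set Set.Ioo_subset_Icc_self

lemma ftc_poly (ρ a b : ℝ) (hab : a ≤ b) (P : Polynomial ℝ) :
    ∫ s in Set.Ioo a b,
        (P.derivative.eval s - 2 * ρ * P.eval s) * Real.exp (-2 * ρ * (s - a))
      = P.eval b * Real.exp (-2 * ρ * (b - a)) - P.eval a := by
  have hF : ∀ s : ℝ, HasDerivAt (fun u => P.eval u * Real.exp (-2 * ρ * (u - a)))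
      ((P.derivative.eval s - 2 * ρ * P.eval s) * Real.exp (-2 * ρ * (s - a))) s := by
    intro s
    have h1 : HasDerivAt (fun u : ℝ => -2 * ρ * (u - a)) (-2 * ρ) s := by
      simpa using ((hasDerivAt_id s).sub_const a).const_mul (-2 * ρ)
    have h2 := h1.exp
    have h3 : HasDerivAt (fun u => P.eval u * Real.exp (-2 * ρ * (u - a)))
        (P.derivative.eval s * Real.exp (-2 * ρ * (s - a))
          + P.eval s * (Real.exp (-2 * ρ * (s - a)) * (-2 * ρ))) s := (P.hasDerivAt s).mul h2
    convert h3 using 1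
    ring
  have hint : IntervalIntegrable
      (fun s => (P.derivative.eval s - 2 * ρ * P.eval s) * Real.exp (-2 * ρ * (s - a)))
      volume a b := by
    apply Continuous.intervalIntegrable
    exact ((P.derivative.continuous_aeval).sub (continuous_const.mul P.continuous_aeval)).mul
      (Real.continuous_exp.comp (by continuity))
  have := intervalIntegral.integral_eq_sub_of_hasDerivAt (fun x _ => hF x) hint
  rw [intervalIntegral.integral_of_le hab, MeasureTheory.integral_Ioc_eq_integral_Ioo] at this
  rw [this]
  simp

lemma cs_core (P Q : Polynomial ℝ) (ρ a' a b : ℝ) :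
    (∫ s in Set.Ioo a b, P.eval s * Q.eval s * Real.exp (-2 * ρ * (s - a'))) ^ 2
      ≤ (∫ s in Set.Ioo a b, (P.eval s) ^ 2 * Real.exp (-2 * ρ * (s - a'))) *
        ∫ s in Set.Ioo a b, (Q.eval s) ^ 2 * Real.exp (-2 * ρ * (s - a')) := by
  set w : ℝ → ℝ := fun s => Real.exp (-2 * ρ * (s - a')) with hw
  set A := ∫ s in Set.Ioo a b, (P.eval s) ^ 2 * w s with hA
  set B := ∫ s in Set.Ioo a b, (Q.eval s) ^ 2 * w s with hB
  set I := ∫ s in Set.Ioo a b, P.eval s * Q.eval s * w s with hI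
  have hIntPP : IntegrableOn (fun s => (P.eval s) ^ 2 * w s) (Set.Ioo a b) volume := by
    have := integrableOn_poly_exp (P ^ 2) ρ a' a b
    simpa only [Polynomial.eval_pow] using this
  have hIntQQ : IntegrableOn (fun s => (Q.eval s) ^ 2 * w s) (Set.Ioo a b) volume := by
    have := integrableOn_poly_exp (Q ^ 2) ρ a' a b
    simpa only [Polynomial.eval_pow] using this
  have hIntPQ : IntegrableOn (fun s => P.eval s * Q.eval s * w s) (Set.Ioo a b) volume := by
    have := integrableOn_poly_exp (P * Q) ρ a' a b
    simpa only [Polynomial.eval_mul] using this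
  have hquad : ∀ lam : ℝ, 0 ≤ A * (lam * lam) + (2 * I) * lam + B := by
    intro lam
    have hnonneg : 0 ≤ ∫ s in Set.Ioo a b, (lam * P.eval s + Q.eval s) ^ 2 * w s := by
      refine MeasureTheory.setIntegral_nonneg measurableSet_Ioo fun s _ => ?_
      have : 0 < w s := Real.exp_pos _
      positivity
    have hexpand : ∫ s in Set.Ioo a b, (lam * P.eval s + Q.eval s) ^ 2 * w s
        = A * (lam * lam) + (2 * I) * lam + B := by
      have hfun : (fun s => (lam * P.eval s + Q.eval s) ^ 2 * w s)
          = fun s => (lam * lam) * ((P.eval s) ^ 2 * w s)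
            + ((2 * lam) * (P.eval s * Q.eval s * w s) + (Q.eval s) ^ 2 * w s) := by
        funext s; ring
      have i1 : Integrable (fun s => (lam * lam) * ((P.eval s) ^ 2 * w s))
          (volume.restrict (Set.Ioo a b)) := hIntPP.const_mul _
      have i2 : Integrable (fun s => (2 * lam) * (P.eval s * Q.eval s * w s))
          (volume.restrict (Set.Ioo a b)) := hIntPQ.const_mul _
      have i3 : Integrable (fun s => (Q.eval s) ^ 2 * w s)
          (volume.restrict (Set.Ioo a b)) := hIntQQ
      have i23 : Integrable (fun s => (2 * lam) * (P.eval s * Q.eval s * w s)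
          + (Q.eval s) ^ 2 * w s) (volume.restrict (Set.Ioo a b)) := i2.add i3
      rw [hfun, MeasureTheory.integral_add i1 i23,
        MeasureTheory.integral_add i2 i3,
        MeasureTheory.integral_const_mul, MeasureTheory.integral_const_mul]
      ring
    rw [← hexpand]; exact hnonneg
  have hdis := discrim_le_zero hquad
  have h4 : (2 * I) ^ 2 - 4 * A * B ≤ 0 := by
    simpa [discrim, sq] using hdis
  nlinarith [h4]


section Quad

variable {q : ℕ} {ρ a b : ℝ} {x wt : Fin (q + 1) → ℝ}

lemma quad_basic (hGR : IsGaussRadauOn q (fun s => Real.exp (-2 * ρ * (s - a))) a b x wt) :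
    ((∏ i, (X - C (x i))).Monic ∧ (∏ i, (X - C (x i))).natDegree = q + 1)
    ∧ (∀ i, (∏ i, (X - C (x i))).eval (x i) = 0)
    ∧ ((∏ i, (X - C (x i))).eval b = 0 ∧ (∏ i, (X - C (x i))).eval a ≠ 0 ∧ a < b) := by
  obtain ⟨hmono, hIoc, hlast, hpos, hexact⟩ := hGR
  have hmonic : (∏ i, (X - C (x i))).Monic :=
    monic_prod_of_monic _ _ fun i _ => monic_X_sub_C _
  have hdeg : (∏ i, (X - C (x i))).natDegree = q + 1 := by
    rw [natDegree_prod_of_monic _ _ fun i _ => monic_X_sub_C _]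
    simp [natDegree_X_sub_C]
  have hroot : ∀ i, (∏ i, (X - C (x i))).eval (x i) = 0 := by
    intro i
    rw [eval_prod]
    exact Finset.prod_eq_zero (mem_univ i) (by simp)
  refine ⟨⟨hmonic, hdeg⟩, hroot, ?_, ?_, (hIoc 0).1.trans_le (hIoc 0).2⟩
  · have := hroot (Fin.last q); rwa [hlast] at this
  · rw [eval_prod]
    refine Finset.prod_ne_zero_iff.mpr fun i _ => ?_
    have : a < x i := (hIoc i).1
    simp only [eval_sub, eval_X, eval_C]
    linarith

lemma quad_exact (hGR : IsGaussRadauOn q (fun s => Real.exp (-2 * ρ * (s - a))) a b x wt)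
    (p : Polynomial ℝ) (hp : p.natDegree ≤ 2 * q) :
    ∫ s in Set.Ioo a b, p.eval s * Real.exp (-2 * ρ * (s - a)) = ∑ i, wt i * p.eval (x i) := by
  simpa using hGR.2.2.2.2 p hp

lemma quad_vanish (hGR : IsGaussRadauOn q (fun s => Real.exp (-2 * ρ * (s - a))) a b x wt)
    (p : Polynomial ℝ) (hp : p.natDegree ≤ 2 * q) (hz : ∀ i, p.eval (x i) = 0) :
    ∫ s in Set.Ioo a b, p.eval s * Real.exp (-2 * ρ * (s - a)) = 0 := by
  rw [quad_exact hGR p hp]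
  simp [hz]

end Quad


lemma key_ineq {q : ℕ} {ρ a b : ℝ} {x wt : Fin (q + 1) → ℝ} (hρ : 0 < ρ)
    (hGR : IsGaussRadauOn q (fun s => Real.exp (-2 * ρ * (s - a))) a b x wt) :
    ∫ s in Set.Ioo a b, ((∏ i, (X - C (x i))).eval s) ^ 2 * Real.exp (-2 * ρ * (s - a))
      ≤ (b - a) / 2 * ((∏ i, (X - C (x i))).eval a) ^ 2 := by
  have hlast : x (Fin.last q) = b := hGR.2.2.1
  obtain ⟨⟨hmonic, hdeg⟩, hroot, hevalb, hevala, hab⟩ := quad_basic hGR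
  set Ω : Polynomial ℝ := ∏ i, (X - C (x i)) with hΩdef
  set p : Fin (q + 1) → Polynomial ℝ := fun j => ∏ i ∈ Finset.univ.erase j, (X - C (x i))
    with hpdef
  set w : ℝ → ℝ := fun s => Real.exp (-2 * ρ * (s - a)) with hwdef
  have hτ : 0 < b - a := sub_pos.2 hab
  have hpmonic : ∀ j, (p j).Monic := fun j =>
    monic_prod_of_monic _ _ fun i _ => monic_X_sub_C _
  have hpdeg : ∀ j, (p j).natDegree = q := by
    intro j
    rw [hpdef, natDegree_prod_of_monic _ _ fun i _ => monic_X_sub_C _]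
    simp [natDegree_X_sub_C, Finset.card_erase_of_mem]
  have hfact : ∀ j, Ω = p j * (X - C (x j)) := fun j =>
    (Finset.prod_erase_mul Finset.univ _ (Finset.mem_univ j)).symm
  set E1 : ℝ := ∫ s in Set.Ioo a b, (Ω * p (Fin.last q)).eval s * w s with hE1def
  set A : ℝ := ∫ s in Set.Ioo a b, (Ω.eval s) ^ 2 * w s with hAdef
  -- all the "Radau moments" are equal
  have hvanish : ∀ j, (∫ s in Set.Ioo a b, (Ω * p j).eval s * w s) = E1 := by
    intro j
    rcases eq_or_ne j (Fin.last q) with rfl | hj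
    · rfl
    · have hq1 : 1 ≤ q := by
        rcases Nat.eq_zero_or_pos q with h0 | h
        · subst h0; exact absurd (Fin.ext (by omega)) hj
        · exact h
      have hdiffdeg : (p j - p (Fin.last q)).natDegree ≤ q - 1 := by
        rw [natDegree_le_iff_coeff_eq_zero]
        intro N hN
        have hNq : q ≤ N := by omega
        by_cases hNe : N = q
        · have c1 := (hpmonic j).coeff_natDegree
          rw [hpdeg j] at c1
          have c2 := (hpmonic (Fin.last q)).coeff_natDegree
          rw [hpdeg (Fin.last q)] at c2
          rw [hNe, coeff_sub, c1, c2, sub_self]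
        · have hlt : q < N := by omega
          rw [coeff_sub, coeff_eq_zero_of_natDegree_lt (by rw [hpdeg]; exact hlt),
            coeff_eq_zero_of_natDegree_lt (by rw [hpdeg]; exact hlt), sub_zero]
      have hmul : (Ω * (p j - p (Fin.last q))).natDegree ≤ 2 * q := by
        refine natDegree_mul_le.trans ?_
        rw [hdeg]
        omega
      have hzero : ∀ i, (Ω * (p j - p (Fin.last q))).eval (x i) = 0 := by
        intro i; rw [eval_mul, hroot i, zero_mul]
      have h0 := quad_vanish hGR _ hmul hzero
      have hint1 := integrableOn_poly_exp (Ω * p j) ρ a a b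
      have hint2 := integrableOn_poly_exp (Ω * p (Fin.last q)) ρ a a b
      have hsplit : (fun s => (Ω * (p j - p (Fin.last q))).eval s * w s)
          = fun s => (Ω * p j).eval s * w s - (Ω * p (Fin.last q)).eval s * w s := by
        funext s
        simp only [eval_mul, eval_sub]
        ring
      rw [show (∫ s in Set.Ioo a b, (Ω * (p j - p (Fin.last q))).eval s
            * Real.exp (-2 * ρ * (s - a))) = ∫ s in Set.Ioo a b,
            ((Ω * p j).eval s * w s - (Ω * p (Fin.last q)).eval s * w s) by
          rw [← hsplit]] at h0
      rw [MeasureTheory.integral_sub hint1 hint2] at h0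
      rw [← hE1def] at h0
      linarith [h0]
  -- sum identity : ∫ Ω Ω' w = (q+1) E1
  have hsumident : (∫ s in Set.Ioo a b, Ω.eval s * Ω.derivative.eval s * w s)
      = ((q : ℝ) + 1) * E1 := by
    have hd : Ω.derivative = ∑ j, p j := by
      rw [hΩdef]
      exact derivative_prod_X_sub_C Finset.univ x
    have hfun : (fun s => Ω.eval s * Ω.derivative.eval s * w s)
        = fun s => ∑ j, (Ω * p j).eval s * w s := by
      funext s
      simp [hd, eval_finset_sum, eval_mul, Finset.mul_sum, Finset.sum_mul]
    rw [hfun, MeasureTheory.integral_finset_sum Finset.univ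
      (fun j _ => integrableOn_poly_exp (Ω * p j) ρ a a b)]
    rw [Finset.sum_congr rfl fun j _ => hvanish j]
    simp [Finset.card_univ, mul_comm]
  -- FTC identity
  have hEq : 2 * (((q : ℝ) + 1) * E1) - 2 * ρ * A = -(Ω.eval a) ^ 2 := by
    have h := ftc_poly ρ a b hab.le (Ω * Ω)
    have hfun2 : (fun s => ((Ω * Ω).derivative.eval s - 2 * ρ * (Ω * Ω).eval s)
          * Real.exp (-2 * ρ * (s - a)))
        = fun s => 2 * (Ω.eval s * Ω.derivative.eval s * w s)
          - 2 * ρ * ((Ω.eval s) ^ 2 * w s) := by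
      funext s
      rw [derivative_mul]
      simp only [eval_mul, eval_add, hwdef]
      ring
    rw [hfun2] at h
    have hint3 : IntegrableOn (fun s => Ω.eval s * Ω.derivative.eval s * w s)
        (Set.Ioo a b) volume := by
      have := integrableOn_poly_exp (Ω * Ω.derivative) ρ a a b
      simpa only [eval_mul] using this
    have hint4 : IntegrableOn (fun s => (Ω.eval s) ^ 2 * w s) (Set.Ioo a b) volume := by
      have := integrableOn_poly_exp (Ω ^ 2) ρ a a b
      simpa only [eval_pow] using this
    rw [MeasureTheory.integral_sub (hint3.const_mul 2) (hint4.const_mul (2 * ρ)),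
      MeasureTheory.integral_const_mul, MeasureTheory.integral_const_mul] at h
    rw [hsumident] at h
    rw [h, eval_mul, eval_mul, hevalb]
    ring
  -- E1 is very negative
  have hE1A : (b - a) * E1 ≤ -A := by
    have hmono := MeasureTheory.setIntegral_mono_on
      (f := fun s => (b - a) * ((Ω * p (Fin.last q)).eval s * w s))
      (g := fun s => -((Ω.eval s) ^ 2 * w s))
      ((integrableOn_poly_exp (Ω * p (Fin.last q)) ρ a a b).const_mul _)
      (by
        have := integrableOn_poly_exp (Ω ^ 2) ρ a a b
        exact ((by simpa only [eval_pow] using this :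
          IntegrableOn (fun s => (Ω.eval s) ^ 2 * w s) (Set.Ioo a b) volume)).neg)
      measurableSet_Ioo ?_
    · rw [MeasureTheory.integral_const_mul, MeasureTheory.integral_neg] at hmono
      exact hmono
    · intro s hs
      obtain ⟨hs1, hs2⟩ := hs
      have hΩs : Ω.eval s = (p (Fin.last q)).eval s * (s - b) := by
        conv_lhs => rw [hfact (Fin.last q)]
        rw [eval_mul, hlast]
        simp
      have hw : 0 < w s := Real.exp_pos _
      have key : 0 ≤ (((p (Fin.last q)).eval s) ^ 2 * w s) * ((b - s) * (s - a)) := by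
        apply mul_nonneg (mul_nonneg (sq_nonneg _) hw.le)
        apply mul_nonneg <;> linarith
      simp only [eval_mul, hΩs]
      nlinarith [key]
  have hA0 : 0 ≤ A := by
    refine MeasureTheory.setIntegral_nonneg measurableSet_Ioo fun s _ => ?_
    have : 0 < w s := Real.exp_pos _
    positivity
  have hE1neg : E1 ≤ 0 := by nlinarith [hE1A, hA0, hτ]
  have h1 : ((q : ℝ) + 1) * E1 ≤ E1 := by
    have : (q : ℝ) * E1 ≤ 0 := mul_nonpos_of_nonneg_of_nonpos (Nat.cast_nonneg q) hE1neg
    linarith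
  have hG2 : (Ω.eval a) ^ 2 = 2 * ρ * A - 2 * (((q : ℝ) + 1) * E1) := by linarith [hEq]
  have hgoal : A ≤ (b - a) / 2 * (Ω.eval a) ^ 2 := by
    rw [hG2]
    have hp1 : (b - a) * (((q : ℝ) + 1) * E1) ≤ (b - a) * E1 :=
      mul_le_mul_of_nonneg_left h1 hτ.le
    have hp2 : 0 ≤ (b - a) * ρ * A := by positivity
    nlinarith [hp1, hp2, hE1A]
  exact hgoal

lemma quad_sq {q : ℕ} {ρ a b : ℝ} {x wt : Fin (q + 1) → ℝ}
    (hGR : IsGaussRadauOn q (fun s => Real.exp (-2 * ρ * (s - a))) a b x wt)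
    (Φ : Polynomial ℝ) (hΦ : Φ.natDegree ≤ q) :
    ∫ s in Set.Ioo a b, (Φ.eval s) ^ 2 * Real.exp (-2 * ρ * (s - a))
      = ∑ i, wt i * (Φ.eval (x i)) ^ 2 := by
  have h := quad_exact hGR (Φ * Φ) (natDegree_mul_le.trans (by omega))
  simp only [eval_mul] at h
  simpa only [pow_two] using h

lemma quad_core {q : ℕ} {ρ a b : ℝ} {x wt : Fin (q + 1) → ℝ}
    (hGR : IsGaussRadauOn q (fun s => Real.exp (-2 * ρ * (s - a))) a b x wt)
    (Φ : Polynomial ℝ) (hΦ : Φ.natDegree ≤ q) :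
    ∑ i, wt i * ((∏ i, (X - C (x i))).derivative.eval (x i) * Φ.eval (x i))
      = -((∏ i, (X - C (x i))).eval a * Φ.eval a)
        + 2 * ρ * ∫ s in Set.Ioo a b,
            (∏ i, (X - C (x i))).eval s * Φ.eval s * Real.exp (-2 * ρ * (s - a)) := by
  have hlast : x (Fin.last q) = b := hGR.2.2.1
  obtain ⟨⟨hmonic, hdeg⟩, hroot, hevalb, hevala, hab⟩ := quad_basic hGR
  set Ω : Polynomial ℝ := ∏ i, (X - C (x i)) with hΩdef
  have hΩd : Ω.derivative.natDegree ≤ q :=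
    (natDegree_derivative_le Ω).trans (by rw [hdeg]; omega)
  have i1 : ∫ s in Set.Ioo a b, (Ω.derivative * Φ).eval s * Real.exp (-2 * ρ * (s - a))
      = ∑ i, wt i * (Ω.derivative * Φ).eval (x i) :=
    quad_exact hGR _ (natDegree_mul_le.trans (by omega))
  have i2 : ∫ s in Set.Ioo a b, (Ω * Φ.derivative).eval s * Real.exp (-2 * ρ * (s - a)) = 0 := by
    by_cases hq : Φ.derivative = 0
    · simp [hq]
    · have hq1 : 1 ≤ q := by
        by_contra h
        have : q = 0 := by omega
        apply hq
        have hC : Φ = Polynomial.C (Φ.coeff 0) := eq_C_of_natDegree_le_zero (by omega)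
        rw [hC, derivative_C]
      have hΦd : Φ.derivative.natDegree ≤ q - 1 :=
        (natDegree_derivative_le Φ).trans (Nat.sub_le_sub_right hΦ 1)
      refine quad_vanish hGR _ (natDegree_mul_le.trans ?_) fun i => by
        rw [eval_mul, hroot i, zero_mul]
      rw [hdeg]
      omega
  have i3 := ftc_poly ρ a b hab.le (Ω * Φ)
  have hfun : (fun s => ((Ω * Φ).derivative.eval s - 2 * ρ * (Ω * Φ).eval s)
        * Real.exp (-2 * ρ * (s - a)))
      = fun s => (Ω.derivative * Φ).eval s * Real.exp (-2 * ρ * (s - a))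
          + ((Ω * Φ.derivative).eval s * Real.exp (-2 * ρ * (s - a))
            - 2 * ρ * (Ω.eval s * Φ.eval s * Real.exp (-2 * ρ * (s - a)))) := by
    funext s
    rw [derivative_mul]
    simp only [eval_mul, eval_add]
    ring
  rw [hfun] at i3
  have hint1 := integrableOn_poly_exp (Ω.derivative * Φ) ρ a a b
  have hint2 := integrableOn_poly_exp (Ω * Φ.derivative) ρ a a b
  have hint3 : IntegrableOn (fun s => Ω.eval s * Φ.eval s * Real.exp (-2 * ρ * (s - a)))
      (Set.Ioo a b) volume := by
    have := integrableOn_poly_exp (Ω * Φ) ρ a a b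
    simpa only [eval_mul] using this
  have j2 : Integrable (fun s => (Ω * Φ.derivative).eval s * Real.exp (-2 * ρ * (s - a))
        - 2 * ρ * (Ω.eval s * Φ.eval s * Real.exp (-2 * ρ * (s - a))))
      (volume.restrict (Set.Ioo a b)) := hint2.sub (hint3.const_mul _)
  rw [MeasureTheory.integral_add hint1 j2,
    MeasureTheory.integral_sub hint2 (hint3.const_mul _),
    MeasureTheory.integral_const_mul, i1, i2] at i3
  rw [eval_mul, hevalb, eval_mul] at i3
  simp only [eval_mul] at i3 ⊢
  linarith [i3]

lemma fin_cons_injective {k : ℕ} {a : ℝ} {x : Fin k → ℝ}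
    (hax : ∀ i, a < x i) (hx : StrictMono x) :
    Function.Injective (Fin.cons a x : Fin (k + 1) → ℝ) := by
  intro j l h
  rcases Fin.eq_zero_or_eq_succ j with rfl | ⟨j', rfl⟩ <;>
    rcases Fin.eq_zero_or_eq_succ l with rfl | ⟨l', rfl⟩
  · rfl
  · rw [Fin.cons_zero, Fin.cons_succ] at h
    exact absurd h (ne_of_lt (hax l'))
  · rw [Fin.cons_zero, Fin.cons_succ] at h
    exact absurd h.symm (ne_of_lt (hax j'))
  · rw [Fin.cons_succ, Fin.cons_succ] at h
    rw [hx.injective h]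

variable {H' : Type*} [NormedAddCommGroup H'] [InnerProductSpace ℝ H']

lemma inner_poly {n : ℕ} (d : Fin (n + 1) → H') (z : H') :
    ∃ Φ : Polynomial ℝ, Φ.natDegree ≤ n ∧
      ∀ s : ℝ, Φ.eval s = ⟪z, ∑ i : Fin (n + 1), s ^ (i : ℕ) • d i⟫ := by
  refine ⟨∑ i : Fin (n + 1), Polynomial.C ⟪z, d i⟫ * X ^ (i : ℕ), ?_, ?_⟩
  · refine Polynomial.natDegree_sum_le_of_forall_le _ _ fun i _ => ?_
    refine (Polynomial.natDegree_C_mul_le _ _).trans ?_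
    simpa using Nat.le_of_lt_succ i.2
  · intro s
    rw [inner_sum, Polynomial.eval_finset_sum]
    refine Finset.sum_congr rfl fun i _ => ?_
    rw [real_inner_smul_right]
    rw [Polynomial.eval_mul, Polynomial.eval_C, Polynomial.eval_pow, Polynomial.eval_X]
    ring

lemma young_final {ρ τ I A B G2 X2 S R V α β : ℝ}
    (hρ : 0 < ρ) (hτ : 0 < τ) (hα : 0 < α) (hβ : 0 < β) (hαβ : α * β = 1 / 4)
    (hCS : I ^ 2 ≤ A * B) (hA : A ≤ τ / 2 * G2) (hB : B ≤ X2 * S) (hB0 : 0 ≤ B)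
    (hG2 : 0 ≤ G2) (hX2 : 0 ≤ X2) (hS : 0 ≤ S) (hV : V = G2 * X2) (hV0 : 0 ≤ V)
    (hR : R = 2 * ρ * I) :
    |R| ≤ 2 * ρ ^ 2 * α * τ * V + β * S := by
  have m1 : A * B ≤ (τ / 2 * G2) * (X2 * S) := by
    apply mul_le_mul hA hB hB0
    positivity
  have m2 : I ^ 2 ≤ (τ / 2 * G2) * (X2 * S) := le_trans hCS m1
  have hR2 : R ^ 2 ≤ 2 * ρ ^ 2 * τ * (V * S) := by
    have he : R ^ 2 = 4 * ρ ^ 2 * I ^ 2 := by rw [hR]; ring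
    rw [he, hV]
    nlinarith [m2, sq_nonneg ρ]
  have hP0 : 0 ≤ 2 * ρ ^ 2 * α * τ * V := by positivity
  have hQ0 : 0 ≤ β * S := by positivity
  have h4 : R ^ 2 ≤ 4 * ((2 * ρ ^ 2 * α * τ * V) * (β * S)) := by
    have e : 4 * ((2 * ρ ^ 2 * α * τ * V) * (β * S)) = 2 * ρ ^ 2 * τ * (V * S) := by
      linear_combination (8 * ρ ^ 2 * τ * V * S) * hαβ
    rw [e]
    exact hR2
  nlinarith [h4, hP0, hQ0, sq_abs R, abs_nonneg R,
    sq_nonneg (2 * ρ ^ 2 * α * τ * V - β * S)]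


end AuxLemmas

/-- Lemma `lem:rhs2_1`: with `η = U - PU` (`P` the interpolation at the Gauß–Radau nodes,
its piece on `I_m` being `Pu m`, and `P̂` the degree-`q+1` interpolation additionally
using the left endpoint `t_{m-1}`, its piece being `Phu m`), for every `m` and every test
polynomial `ψ` of degree `≤ q`:
`Q_{m,ρ}[∂ₜM₀η, ψ] + ⟨M₀[η]_{m-1}^0, ψ(t_{m-1}+)⟩ = Q_{m,ρ}[∂ₜM₀(U - P̂U), ψ] + R(U,ψ)`
with `|R(U,ψ)| ≤ C α τ_m |M₀η(t_{m-1}+)|² + β ⦀ψ⦀²_{Q,ρ,m}` for all `α, β > 0` with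
`αβ = 1/4`, where `C ≥ 0` depends only on the final time `T` and on `ρ`. -/
theorem stmt_3 {H : Type*} [NormedAddCommGroup H] [InnerProductSpace ℝ H]
    (ρ T : ℝ) (hρ : 0 < ρ) (hT : 0 < T) :
    ∃ C : ℝ, 0 ≤ C ∧
      ∀ (M₀ : H →L[ℝ] H), (∀ x y : H, ⟪M₀ x, y⟫ = ⟪x, M₀ y⟫) →
      ∀ (q N : ℕ), 1 ≤ N →
      ∀ (t : ℕ → ℝ), t 0 = 0 → t N = T → (∀ m, m < N → t m < t (m + 1)) →
      ∀ (node wt : ℕ → Fin (q + 1) → ℝ),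
        (∀ m, 1 ≤ m → m ≤ N →
          IsGaussRadauOn q (fun s => Real.exp (-2 * ρ * (s - t (m - 1)))) (t (m - 1))
            (t m) (node m) (wt m)) →
      ∀ (U : ℝ → H), Continuous U → Differentiable ℝ U →
      ∀ (Pu : ℕ → ℝ → H),
        (∀ m, 1 ≤ m → m ≤ N → IsPolyDeg q (Pu m) ∧
          ∀ i, Pu m (node m i) = U (node m i)) →
      ∀ (Phu : ℕ → ℝ → H),
        (∀ m, 1 ≤ m → m ≤ N → IsPolyDeg (q + 1) (Phu m) ∧
          (∀ i, Phu m (node m i) = U (node m i)) ∧ Phu m (t (m - 1)) = U (t (m - 1))) →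
      ∀ m, 1 ≤ m → m ≤ N → ∀ ψ : ℝ → H, IsPolyDeg q ψ →
      ∃ R : ℝ,
        ((∑ i, wt m i *
              ⟪deriv (fun s => M₀ (U s) - M₀ (Pu m s)) (node m i), ψ (node m i)⟫)
            + ⟪M₀ ((U (t (m - 1)) - Pu m (t (m - 1))) -
                (if m = 1 then 0 else U (t (m - 1)) - Pu (m - 1) (t (m - 1)))),
                ψ (t (m - 1))⟫
          = (∑ i, wt m i *
              ⟪deriv (fun s => M₀ (U s) - M₀ (Phu m s)) (node m i), ψ (node m i)⟫) + R) ∧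
        ∀ α β : ℝ, 0 < α → 0 < β → α * β = 1 / 4 →
          |R| ≤ C * α * (t m - t (m - 1)) * ‖M₀ (U (t (m - 1)) - Pu m (t (m - 1)))‖ ^ 2
            + β * (∑ i, wt m i * ⟪ψ (node m i), ψ (node m i)⟫) := by
  refine ⟨2 * ρ ^ 2, by positivity, ?_⟩
  intro M₀ hM₀sym q N hN t ht0 htN htmono nodes wts hquad U hUcont hUdiff Pu hPu Phu hPhu
    m hm1 hmN ψ hψ
  obtain ⟨d, hd⟩ := hψ
  set a : ℝ := t (m - 1) with ha
  set b : ℝ := t m with hb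
  set x : Fin (q + 1) → ℝ := nodes m with hx
  set cw : Fin (q + 1) → ℝ := wts m with hcw
  set v : H := U a - Pu m a with hv
  have hGR : IsGaussRadauOn q (fun s => Real.exp (-2 * ρ * (s - a))) a b x cw :=
    hquad m hm1 hmN
  have hlast : x (Fin.last q) = b := hGR.2.2.1
  have hIoc : ∀ i, x i ∈ Set.Ioc a b := hGR.2.1
  have hwt : ∀ i, 0 < cw i := hGR.2.2.2.1
  have hmono : StrictMono x := hGR.1
  obtain ⟨⟨hmonic, hdeg⟩, hroot, hevalb, hevala, hab⟩ := quad_basic hGR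
  set Ω : Polynomial ℝ := ∏ i, (X - C (x i)) with hΩdef
  set G : ℝ := Ω.eval a with hG
  have hGne : G ≠ 0 := hevala
  set u : H := G⁻¹ • v with hu
  have hvGu : v = G • u := by rw [hu, smul_inv_smul₀ hGne]
  have hPum := hPu m hm1 hmN
  have hPhum := hPhu m hm1 hmN
  -- factorization of Phu - Pu
  have hfac : ∀ s : ℝ, Phu m s - Pu m s = Ω.eval s • u := by
    have hf : IsPolyDeg (q + 1) (fun s => (Phu m s - Pu m s) - Ω.eval s • u) :=
      IsPolyDeg.sub (IsPolyDeg.sub hPhum.1 hPum.1.succ)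
        (isPolyDeg_eval_smul (le_of_eq hdeg) u)
    have hinj : Function.Injective (Fin.cons a x : Fin (q + 1 + 1) → ℝ) :=
      fin_cons_injective (fun i => (hIoc i).1) hmono
    have hzero : ∀ j : Fin (q + 1 + 1),
        ((fun s => (Phu m s - Pu m s) - Ω.eval s • u) ((Fin.cons a x : Fin (q + 1 + 1) → ℝ) j)) = 0 := by
      intro j
      rcases Fin.eq_zero_or_eq_succ j with rfl | ⟨j', rfl⟩
      · simp only [Fin.cons_zero]
        rw [hPhum.2.2, ← hG, ← hvGu, ← hv]
        abel
      · simp only [Fin.cons_succ]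
        rw [hPhum.2.1 j', hPum.2 j', hroot j', zero_smul]
        abel
    have := isPolyDeg_eq_zero hf hinj hzero
    intro s
    have h2 := this s
    simp only [sub_eq_zero] at h2
    exact h2
  have hMfac : ∀ s : ℝ, M₀ (Phu m s) - M₀ (Pu m s) = Ω.eval s • (M₀ u) := by
    intro s
    rw [← map_sub, hfac s, M₀.map_smul]
  -- differentiability
  have hPhu_diff : Differentiable ℝ (Phu m) := hPhum.1.differentiable
  have hPu_diff : Differentiable ℝ (Pu m) := hPum.1.differentiable
  have hMU_diff : Differentiable ℝ (fun s => M₀ (U s)) :=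
    M₀.differentiable.comp hUdiff
  have hf2diff : Differentiable ℝ (fun s => M₀ (U s) - M₀ (Phu m s)) :=
    hMU_diff.sub (M₀.differentiable.comp hPhu_diff)
  -- derivative splitting
  have hder : ∀ i, deriv (fun s => M₀ (U s) - M₀ (Pu m s)) (x i)
      = deriv (fun s => M₀ (U s) - M₀ (Phu m s)) (x i)
        + Ω.derivative.eval (x i) • M₀ u := by
    intro i
    have hsplit : (fun s => M₀ (U s) - M₀ (Pu m s))
        = fun s => (M₀ (U s) - M₀ (Phu m s)) + Ω.eval s • M₀ u := by
      funext s
      rw [← hMfac s]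
      abel
    have h3 : HasDerivAt (fun s : ℝ => Ω.eval s • M₀ u)
        (Ω.derivative.eval (x i) • M₀ u) (x i) :=
      (Polynomial.hasDerivAt Ω (x i)).smul_const (M₀ u)
    rw [hsplit, deriv_fun_add (hf2diff _) h3.differentiableAt, h3.deriv]
  -- scalar polynomial
  obtain ⟨Φ, hΦdeg, hΦev⟩ := inner_poly d (M₀ u)
  have hφ : ∀ s : ℝ, Φ.eval s = ⟪M₀ u, ψ s⟫ := by
    intro s
    rw [hΦev s, ← hd s]
  set R : ℝ := 2 * ρ *
    ∫ s in Set.Ioo a b, Ω.eval s * Φ.eval s * Real.exp (-2 * ρ * (s - a)) with hR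
  refine ⟨R, ?_, ?_⟩
  · -- the identity
    have hjump : (U a - Pu m a) - (if m = 1 then 0 else U a - Pu (m - 1) a) = v := by
      rw [hv]
      by_cases hm : m = 1
      · rw [if_pos hm]
        abel
      · have h1m : 1 ≤ m - 1 := by omega
        have hmN' : m - 1 ≤ N := by omega
        have hlast' : nodes (m - 1) (Fin.last q) = t (m - 1) := (hquad (m - 1) h1m hmN').2.2.1
        have hPuval := (hPu (m - 1) h1m hmN').2 (Fin.last q)
        rw [hlast'] at hPuval
        have hPuval' : Pu (m - 1) a = U a := hPuval
        rw [if_neg hm, hPuval']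
        abel
    have hterm : ∀ i, ⟪deriv (fun s => M₀ (U s) - M₀ (Pu m s)) (x i), ψ (x i)⟫
        = ⟪deriv (fun s => M₀ (U s) - M₀ (Phu m s)) (x i), ψ (x i)⟫
          + Ω.derivative.eval (x i) * Φ.eval (x i) := by
      intro i
      rw [hder i, inner_add_left, real_inner_smul_left, hφ]
    have hjump2 : ⟪M₀ ((U a - Pu m a) - (if m = 1 then 0 else U a - Pu (m - 1) a)), ψ a⟫
        = G * Φ.eval a := by
      rw [hjump, hvGu, M₀.map_smul, real_inner_smul_left, hφ]
    rw [hjump2]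
    rw [Finset.sum_congr rfl fun i _ => by rw [hterm i, mul_add]]
    rw [Finset.sum_add_distrib]
    rw [quad_core hGR Φ hΦdeg, ← hΩdef, ← hG, ← hR]
    ring
  · -- the bound
    intro α β hα hβ hαβ
    set A : ℝ := ∫ s in Set.Ioo a b, (Ω.eval s) ^ 2 * Real.exp (-2 * ρ * (s - a)) with hA
    set B : ℝ := ∫ s in Set.Ioo a b, (Φ.eval s) ^ 2 * Real.exp (-2 * ρ * (s - a)) with hB
    set I : ℝ := ∫ s in Set.Ioo a b, Ω.eval s * Φ.eval s * Real.exp (-2 * ρ * (s - a)) with hI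
    set S : ℝ := ∑ i, cw i * ⟪ψ (x i), ψ (x i)⟫ with hS
    have hAle : A ≤ (b - a) / 2 * G ^ 2 := key_ineq hρ hGR
    have hCS : I ^ 2 ≤ A * B := cs_core Ω Φ ρ a a b
    have hBq : B = ∑ i, cw i * (Φ.eval (x i)) ^ 2 := quad_sq hGR Φ hΦdeg
    have hphi_bound : ∀ i, (Φ.eval (x i)) ^ 2 ≤ ‖M₀ u‖ ^ 2 * ⟪ψ (x i), ψ (x i)⟫ := by
      intro i
      rw [hφ]
      have h1 := real_inner_mul_inner_self_le (M₀ u) (ψ (x i))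
      have h2 : ⟪M₀ u, M₀ u⟫ = ‖M₀ u‖ ^ 2 := real_inner_self_eq_norm_sq (M₀ u)
      rw [h2] at h1
      rw [pow_two]
      exact h1
    have hBle : B ≤ ‖M₀ u‖ ^ 2 * S := by
      rw [hBq, hS, Finset.mul_sum]
      refine Finset.sum_le_sum fun i _ => ?_
      calc cw i * (Φ.eval (x i)) ^ 2
          ≤ cw i * (‖M₀ u‖ ^ 2 * ⟪ψ (x i), ψ (x i)⟫) :=
            mul_le_mul_of_nonneg_left (hphi_bound i) (hwt i).le
        _ = ‖M₀ u‖ ^ 2 * (cw i * ⟪ψ (x i), ψ (x i)⟫) := by ring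
    have hS0 : 0 ≤ S := by
      refine Finset.sum_nonneg fun i _ => ?_
      exact mul_nonneg (hwt i).le real_inner_self_nonneg
    have hB0 : 0 ≤ B := by
      rw [hB]
      refine MeasureTheory.setIntegral_nonneg measurableSet_Ioo fun s _ => ?_
      have : (0:ℝ) < Real.exp (-2 * ρ * (s - a)) := Real.exp_pos _
      positivity
    have hτ : 0 < b - a := sub_pos.2 hab
    have hXv : ‖M₀ v‖ ^ 2 = G ^ 2 * ‖M₀ u‖ ^ 2 := by
      have hMv : M₀ v = G • M₀ u := by rw [hvGu, M₀.map_smul]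
      rw [hMv, norm_smul]
      rw [mul_pow]
      simp [sq_abs]
    exact young_final hρ hτ hα hβ hαβ hCS hAle hBle hB0 (sq_nonneg G) (sq_nonneg _)
      hS0 hXv (sq_nonneg _) hR
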